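/- arXiv:math/0204114 — 2 statements merged into one kernel-verified Lean document; each statement's English description precedes it below -/
import Mathlib

section
/- The map d(x,y) = ρ(x−y) defines a metric on ℝⁿ: it is nonnegative, vanishes iff x = y, is symmetric, and satisfies the triangle inequality ρ(x+y) ≤ ρ(x) + ρ(y). -/
/-- `s^p + r^p ≤ (s+r)^p` for nonneg reals and `p ≥ 1`. -/
lemma aux_add_rpow {s r p : ℝ} (hs : 0 ≤ s) (hr : 0 ≤ r) (hp : 1 ≤ p) :
    s ^ p + r ^ p ≤ (s + r) ^ p := by
  have h := NNReal.add_rpow_le_rpow_add s.toNNReal r.toNNReal hp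
  have h' := NNReal.coe_le_coe.mpr h
  rw [NNReal.coe_add, NNReal.coe_rpow, NNReal.coe_rpow, NNReal.coe_rpow,
    NNReal.coe_add, Real.coe_toNNReal s hs, Real.coe_toNNReal r hr] at h'
  exact h'

/-- Per-coordinate convexity-type inequality. -/
lemma aux_key {s r c x y : ℝ} (hs : 0 < s) (hr : 0 < r) (hc : 2 ≤ c) :
    (x + y) ^ 2 * (s + r) ^ (-c) ≤
      s / (s + r) * (x ^ 2 * s ^ (-c)) + r / (s + r) * (y ^ 2 * r ^ (-c)) := by
  have hsr : 0 < s + r := by linarith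
  set u := s ^ (c - 1) with hu
  set v := r ^ (c - 1) with hv
  set w := (s + r) ^ (c - 1) with hw
  have hu0 : 0 < u := Real.rpow_pos_of_pos hs _
  have hv0 : 0 < v := Real.rpow_pos_of_pos hr _
  have hw0 : 0 < w := Real.rpow_pos_of_pos hsr _
  have huvw : u + v ≤ w := aux_add_rpow hs.le hr.le (by linarith)
  have cs : (x + y) ^ 2 * (u * v) ≤ (x ^ 2 / u + y ^ 2 / v) * (u + v) * (u * v) := by
    have expand : (x ^ 2 / u + y ^ 2 / v) * (u + v) * (u * v)
        = x ^ 2 * u * v + x ^ 2 * v ^ 2 + y ^ 2 * u ^ 2 + y ^ 2 * u * v := by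
      field_simp; ring
    rw [expand]
    nlinarith [sq_nonneg (x * v - y * u), mul_pos hu0 hv0]
  have cs' : (x + y) ^ 2 ≤ (x ^ 2 / u + y ^ 2 / v) * (u + v) :=
    le_of_mul_le_mul_right (by linarith [cs]) (mul_pos hu0 hv0)
  have step : (x + y) ^ 2 ≤ (x ^ 2 / u + y ^ 2 / v) * w := by
    calc (x + y) ^ 2 ≤ (x ^ 2 / u + y ^ 2 / v) * (u + v) := cs'
    _ ≤ (x ^ 2 / u + y ^ 2 / v) * w := by
        apply mul_le_mul_of_nonneg_left huvw
        positivity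
  have hrw : ∀ a : ℝ, 0 < a → a ^ (-c) = (a ^ (c - 1) * a)⁻¹ := by
    intro a ha
    rw [show -c = (-(c-1)) + (-1) by ring, Real.rpow_add ha, Real.rpow_neg ha.le,
      Real.rpow_neg_one, mul_inv]
  rw [hrw s hs, hrw r hr, hrw (s + r) hsr, ← hu, ← hv, ← hw]
  have h1 : (x + y) ^ 2 * (w * (s + r))⁻¹
      ≤ ((x ^ 2 / u + y ^ 2 / v) * w) * (w * (s + r))⁻¹ :=
    mul_le_mul_of_nonneg_right step (by positivity)
  refine h1.trans_eq ?_
  field_simp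

/-- `d(x,y) = ρ(x−y)` is a metric on ℝⁿ: ρ is nonnegative, vanishes only at 0,
is even (symmetry of d) and subadditive (triangle inequality). -/
theorem stmt_2 {n : ℕ} (α : Fin n → ℝ) (hα : ∀ i, 1 ≤ α i)
    (ρ : (Fin n → ℝ) → ℝ) (hρ0 : ρ 0 = 0)
    (hρpos : ∀ x, x ≠ 0 → 0 < ρ x)
    (hρeq : ∀ x, x ≠ 0 → ∑ i, x i ^ 2 * (ρ x) ^ (-(2 * α i)) = 1)
    (hρuniq : ∀ x, x ≠ 0 → ∀ t : ℝ, 0 < t →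
      (∑ i, x i ^ 2 * t ^ (-(2 * α i)) = 1) → t = ρ x) :
    (∀ x, 0 ≤ ρ x) ∧
    (∀ x, ρ x = 0 ↔ x = 0) ∧
    (∀ x, ρ (-x) = ρ x) ∧
    (∀ x y, ρ (x + y) ≤ ρ x + ρ y) := by
  refine ⟨?_, ?_, ?_, ?_⟩
  · intro x
    by_cases hx : x = 0
    · rw [hx, hρ0]
    · exact (hρpos x hx).le
  · intro x
    constructor
    · intro h
      by_contra hx
      exact absurd h (ne_of_gt (hρpos x hx))
    · intro h; rw [h, hρ0]
  · intro x
    by_cases hx : x = 0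
    · rw [hx, neg_zero]
    · have hx' : -x ≠ 0 := neg_ne_zero.mpr hx
      refine (hρuniq (-x) hx' (ρ x) (hρpos x hx) ?_).symm
      simp only [Pi.neg_apply, neg_sq]
      exact hρeq x hx
  · intro x y
    by_cases hx : x = 0
    · rw [hx, hρ0, zero_add, zero_add]
    by_cases hy : y = 0
    · rw [hy, hρ0, add_zero, add_zero]
    by_cases hxy : x + y = 0
    · rw [hxy, hρ0]
      linarith [hρpos x hx, hρpos y hy]
    have hs := hρpos x hx
    have hr := hρpos y hy
    have hsr : 0 < ρ x + ρ y := by linarith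
    have hsum : ∑ i, (x + y) i ^ 2 * (ρ x + ρ y) ^ (-(2 * α i)) ≤ 1 := by
      calc ∑ i, (x + y) i ^ 2 * (ρ x + ρ y) ^ (-(2 * α i))
          ≤ ∑ i, (ρ x / (ρ x + ρ y) * (x i ^ 2 * (ρ x) ^ (-(2 * α i)))
              + ρ y / (ρ x + ρ y) * (y i ^ 2 * (ρ y) ^ (-(2 * α i)))) := by
            refine Finset.sum_le_sum fun i _ => ?_
            have := aux_key (c := 2 * α i) (x := x i) (y := y i) hs hr
              (by linarith [hα i])
            simpa [Pi.add_apply] using this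
        _ = ρ x / (ρ x + ρ y) * ∑ i, x i ^ 2 * (ρ x) ^ (-(2 * α i))
              + ρ y / (ρ x + ρ y) * ∑ i, y i ^ 2 * (ρ y) ^ (-(2 * α i)) := by
            rw [Finset.sum_add_distrib, Finset.mul_sum, Finset.mul_sum]
        _ = ρ x / (ρ x + ρ y) + ρ y / (ρ x + ρ y) := by
            rw [hρeq x hx, hρeq y hy, mul_one, mul_one]
        _ = 1 := by field_simp
    by_contra hcon
    push_neg at hcon
    obtain ⟨i0, hi0⟩ := Function.ne_iff.mp hxy
    have ht : 0 < ρ (x + y) := hρpos _ hxy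
    have hlt : ∑ i, (x + y) i ^ 2 * (ρ (x + y)) ^ (-(2 * α i))
        < ∑ i, (x + y) i ^ 2 * (ρ x + ρ y) ^ (-(2 * α i)) := by
      refine Finset.sum_lt_sum (fun i _ => ?_) ⟨i0, Finset.mem_univ i0, ?_⟩
      · refine mul_le_mul_of_nonneg_left ?_ (sq_nonneg _)
        exact Real.rpow_le_rpow_of_nonpos hsr hcon.le
          (by nlinarith [hα i])
      · have hne : (x + y) i0 ≠ 0 := by simpa using hi0
        refine mul_lt_mul_of_pos_left ?_ (by positivity)
        exact Real.rpow_lt_rpow_of_neg hsr hcon (by nlinarith [hα i0])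
    rw [hρeq _ hxy] at hlt
    linarith
end

section
/- (Hörmander integral condition) The kernel H(x) = Y(x/ρ(x))ρ(x)^{−α}, with Y a spherical harmonic of degree m, satisfies ∫_{ρ(y) ≥ 4ρ(x)} |H(y−x) − H(y)| dy ≤ C with C independent of x ∈ ℝⁿ \ {0} (C may depend on m, n, α). -/
open MvPolynomial MeasureTheory

private lemma gsum_lt' {n : ℕ} (α : Fin n → ℝ) (hα : ∀ i, 1 ≤ α i) {x : Fin n → ℝ}
    (hx : x ≠ 0) {s t : ℝ} (hs : 0 < s) (hst : s < t) :
    ∑ i, x i ^ 2 * t ^ (-(2 * α i)) < ∑ i, x i ^ 2 * s ^ (-(2 * α i)) := by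
  have hx' : ∃ i, x i ≠ 0 := by
    by_contra h; push_neg at h; exact hx (funext h)
  obtain ⟨i₀, hi₀⟩ := hx'
  apply Finset.sum_lt_sum
  · intro i _
    have h1 : t ^ (-(2 * α i)) ≤ s ^ (-(2 * α i)) :=
      Real.rpow_le_rpow_of_nonpos hs hst.le (by nlinarith [hα i])
    nlinarith [sq_nonneg (x i)]
  · refine ⟨i₀, Finset.mem_univ _, ?_⟩
    have h2 : t ^ (-(2 * α i₀)) < s ^ (-(2 * α i₀)) :=
      Real.rpow_lt_rpow_of_neg hs hst (by nlinarith [hα i₀])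
    have h3 : 0 < x i₀ ^ 2 := by positivity
    nlinarith

private lemma rho_le_iff' {n : ℕ} (α : Fin n → ℝ) (hα : ∀ i, 1 ≤ α i) {x : Fin n → ℝ}
    (hx : x ≠ 0) {R t : ℝ} (hR : 0 < R)
    (heq : ∑ i, x i ^ 2 * R ^ (-(2 * α i)) = 1) (ht : 0 < t) :
    R ≤ t ↔ ∑ i, x i ^ 2 * t ^ (-(2 * α i)) ≤ 1 := by
  constructor
  · intro h
    rcases eq_or_lt_of_le h with h' | h'
    · rw [← h']; exact le_of_eq heq
    · exact le_of_lt (heq ▸ gsum_lt' α hα hx hR h')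
  · intro h
    by_contra hc
    push_neg at hc
    have := gsum_lt' α hα hx ht hc
    rw [heq] at this
    linarith

private lemma le_rho_iff' {n : ℕ} (α : Fin n → ℝ) (hα : ∀ i, 1 ≤ α i) {x : Fin n → ℝ}
    (hx : x ≠ 0) {R t : ℝ} (hR : 0 < R)
    (heq : ∑ i, x i ^ 2 * R ^ (-(2 * α i)) = 1) (ht : 0 < t) :
    t ≤ R ↔ 1 ≤ ∑ i, x i ^ 2 * t ^ (-(2 * α i)) := by
  constructor
  · intro h
    rcases eq_or_lt_of_le h with h' | h'
    · rw [h']; exact le_of_eq heq.symm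
    · exact le_of_lt (heq ▸ gsum_lt' α hα hx ht h')
  · intro h
    by_contra hc
    push_neg at hc
    have := gsum_lt' α hα hx hR hc
    rw [heq] at this
    linarith

private lemma abs_coord_le' {n : ℕ} (α : Fin n → ℝ) {x : Fin n → ℝ} {R : ℝ} (hR : 0 < R)
    (heq : ∑ i, x i ^ 2 * R ^ (-(2 * α i)) = 1) (i : Fin n) :
    |x i| ≤ R ^ α i := by
  have hterm : x i ^ 2 * R ^ (-(2 * α i)) ≤ 1 := by
    rw [← heq]
    refine Finset.single_le_sum (f := fun j => x j ^ 2 * R ^ (-(2 * α j))) (fun j _ => ?_) (Finset.mem_univ i)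
    positivity
  have hpow : R ^ (2 * α i) = (R ^ α i) ^ 2 := by
    rw [← Real.rpow_natCast (R ^ α i) 2, ← Real.rpow_mul hR.le]
    norm_num; ring_nf
  have hRpos : (0:ℝ) < R ^ (2 * α i) := Real.rpow_pos_of_pos hR _
  have hinv : R ^ (-(2 * α i)) = (R ^ (2 * α i))⁻¹ := Real.rpow_neg hR.le _
  have hx2 : x i ^ 2 ≤ (R ^ α i) ^ 2 := by
    rw [hinv] at hterm
    rw [← hpow]
    calc x i ^ 2 = x i ^ 2 * (R ^ (2 * α i))⁻¹ * R ^ (2 * α i) := by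
          field_simp
      _ ≤ 1 * R ^ (2 * α i) := by
          apply mul_le_mul_of_nonneg_right hterm hRpos.le
      _ = R ^ (2 * α i) := one_mul _
  calc |x i| = Real.sqrt (x i ^ 2) := (Real.sqrt_sq_eq_abs _).symm
    _ ≤ Real.sqrt ((R ^ α i) ^ 2) := Real.sqrt_le_sqrt hx2
    _ = R ^ α i := Real.sqrt_sq (Real.rpow_nonneg hR.le _)

private lemma sphere_eq' {n : ℕ} (α : Fin n → ℝ) {x : Fin n → ℝ} {R : ℝ} (hR : 0 < R)
    (heq : ∑ i, x i ^ 2 * R ^ (-(2 * α i)) = 1) :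
    ∑ i, (x i / R ^ α i) ^ 2 = 1 := by
  rw [← heq]
  refine Finset.sum_congr rfl fun i _ => ?_
  have hpow : R ^ (2 * α i) = (R ^ α i) ^ 2 := by
    rw [← Real.rpow_natCast (R ^ α i) 2, ← Real.rpow_mul hR.le]
    norm_num; ring_nf
  rw [div_pow, Real.rpow_neg hR.le, hpow]
  field_simp

private lemma contDiff_eval_P' {n : ℕ} (P : MvPolynomial (Fin n) ℝ) :
    ContDiff ℝ 1 fun x : Fin n → ℝ => eval x P := by
  induction P using MvPolynomial.induction_on with
  | C a => simpa only [eval_C] using contDiff_const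
  | add p q hp hq => simpa only [eval_add] using hp.add hq
  | mul_X p i hp =>
      simp only [eval_mul, eval_X]
      exact hp.mul (ContinuousLinearMap.proj i : (Fin n → ℝ) →L[ℝ] ℝ).contDiff

private lemma abs_rpow_neg_sub_le' {β c a b : ℝ} (hβ : 0 < β) (hc : 0 < c)
    (ha : c ≤ a) (hb : c ≤ b) :
    |a ^ (-β) - b ^ (-β)| ≤ β * c ^ (-β - 1) * |a - b| := by
  have key := Convex.norm_image_sub_le_of_norm_deriv_le (f := fun t : ℝ => t ^ (-β))
    (s := Set.Ici c) (C := β * c ^ (-β - 1))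
    (fun t ht => (Real.hasDerivAt_rpow_const
      (Or.inl (ne_of_gt (hc.trans_le ht)))).differentiableAt)
    (fun t ht => by
      have htpos : 0 < t := hc.trans_le ht
      rw [Real.deriv_rpow_const t (-β)]
      have h1 : t ^ (-β - 1) ≤ c ^ (-β - 1) :=
        Real.rpow_le_rpow_of_nonpos hc ht (by linarith)
      have h2 : (0:ℝ) ≤ t ^ (-β - 1) := Real.rpow_nonneg htpos.le _
      rw [Real.norm_eq_abs, abs_mul, abs_neg, abs_of_pos hβ, abs_of_nonneg h2]
      exact mul_le_mul_of_nonneg_left h1 hβ.le)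
    (convex_Ici c) hb ha
  simpa [Real.norm_eq_abs] using key


private lemma rho_triangle' {n : ℕ} (α : Fin n → ℝ) (hα : ∀ i, 1 ≤ α i)
    (ρ : (Fin n → ℝ) → ℝ) (hρ0 : ρ 0 = 0)
    (hρpos : ∀ x, x ≠ 0 → 0 < ρ x)
    (hρeq : ∀ x, x ≠ 0 → ∑ i, x i ^ 2 * (ρ x) ^ (-(2 * α i)) = 1)
    (a b : Fin n → ℝ) : ρ (a + b) ≤ ρ a + ρ b := by
  by_cases ha : a = 0
  · subst ha; simp [hρ0]
  by_cases hb : b = 0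
  · subst hb; simp [hρ0]
  have hρa := hρpos a ha
  have hρb := hρpos b hb
  by_cases hab : a + b = 0
  · rw [hab, hρ0]; linarith
  set s := ρ a + ρ b with hs
  have hsp : 0 < s := by linarith
  rw [rho_le_iff' α hα hab (hρpos _ hab) (hρeq _ hab) hsp]
  -- termwise square identities
  have hsq : ∀ c : ℝ, ∀ i : Fin n, (c * s ^ (-(α i))) ^ 2 = c ^ 2 * s ^ (-(2 * α i)) := by
    intro c i
    have : (s ^ (-(α i))) ^ (2:ℕ) = s ^ (-(2 * α i)) := by
      rw [← Real.rpow_natCast (s ^ (-(α i))) 2, ← Real.rpow_mul hsp.le]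
      norm_num; ring_nf
    rw [mul_pow, this]
  -- key bound for a (and b)
  have hkey : ∀ z : Fin n → ℝ, z ≠ 0 → ρ z ≤ s →
      ∑ i, z i ^ 2 * s ^ (-(2 * α i)) ≤ (ρ z / s) ^ 2 := by
    intro z hz hzs
    have hρz := hρpos z hz
    have hterm : ∀ i : Fin n,
        z i ^ 2 * s ^ (-(2 * α i)) ≤ z i ^ 2 * (ρ z) ^ (-(2 * α i)) * (ρ z / s) ^ 2 := by
      intro i
      have hdivpos : 0 < ρ z / s := div_pos hρz hsp
      have hdiv1 : ρ z / s ≤ 1 := (div_le_one hsp).mpr hzs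
      have h1 : (ρ z / s) ^ (2 * α i) ≤ (ρ z / s) ^ (2:ℝ) :=
        Real.rpow_le_rpow_of_exponent_ge hdivpos hdiv1 (by nlinarith [hα i])
      have h2 : (ρ z / s) ^ (2 * α i) = (ρ z) ^ (2 * α i) * s ^ (-(2 * α i)) := by
        rw [Real.div_rpow hρz.le hsp.le, Real.rpow_neg hsp.le, div_eq_mul_inv]
      have h3 : (ρ z / s) ^ ((2:ℝ)) = (ρ z / s) ^ (2:ℕ) := by
        rw [← Real.rpow_natCast (ρ z / s) 2]; norm_num
      have h4 : (ρ z) ^ (-(2 * α i)) * (ρ z) ^ (2 * α i) = 1 := by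
        rw [← Real.rpow_add hρz]; norm_num
      calc z i ^ 2 * s ^ (-(2 * α i))
          = z i ^ 2 * ((ρ z) ^ (-(2 * α i)) * ((ρ z) ^ (2 * α i) * s ^ (-(2 * α i)))) := by
            rw [← mul_assoc ((ρ z) ^ (-(2 * α i)))]; rw [h4, one_mul]
        _ = z i ^ 2 * ((ρ z) ^ (-(2 * α i)) * (ρ z / s) ^ (2 * α i)) := by rw [h2]
        _ ≤ z i ^ 2 * ((ρ z) ^ (-(2 * α i)) * (ρ z / s) ^ (2:ℝ)) := by
            have hnn : (0:ℝ) ≤ z i ^ 2 * (ρ z) ^ (-(2 * α i)) := by positivity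
            have := mul_le_mul_of_nonneg_left h1 hnn
            nlinarith [this]
        _ = z i ^ 2 * (ρ z) ^ (-(2 * α i)) * (ρ z / s) ^ 2 := by
            rw [h3]; push_cast; ring
    calc ∑ i, z i ^ 2 * s ^ (-(2 * α i))
        ≤ ∑ i, z i ^ 2 * (ρ z) ^ (-(2 * α i)) * (ρ z / s) ^ 2 :=
          Finset.sum_le_sum fun i _ => hterm i
      _ = (∑ i, z i ^ 2 * (ρ z) ^ (-(2 * α i))) * (ρ z / s) ^ 2 := by
          rw [Finset.sum_mul]
      _ = (ρ z / s) ^ 2 := by rw [hρeq z hz, one_mul]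
  have hA2 := hkey a ha (by linarith)
  have hB2 := hkey b hb (by linarith)
  -- Cauchy-Schwarz
  have hCS := Real.sum_mul_le_sqrt_mul_sqrt Finset.univ
    (fun i => a i * s ^ (-(α i))) (fun i => b i * s ^ (-(α i)))
  set X := Real.sqrt (∑ i, (a i * s ^ (-(α i))) ^ 2) with hX
  set Y := Real.sqrt (∑ i, (b i * s ^ (-(α i))) ^ 2) with hY
  have hXa : X ≤ ρ a / s := by
    rw [hX]
    have : ∑ i, (a i * s ^ (-(α i))) ^ 2 = ∑ i, a i ^ 2 * s ^ (-(2 * α i)) :=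
      Finset.sum_congr rfl fun i _ => hsq (a i) i
    rw [this]
    calc Real.sqrt (∑ i, a i ^ 2 * s ^ (-(2 * α i)))
        ≤ Real.sqrt ((ρ a / s) ^ 2) := Real.sqrt_le_sqrt hA2
      _ = ρ a / s := Real.sqrt_sq (by positivity)
  have hYb : Y ≤ ρ b / s := by
    rw [hY]
    have : ∑ i, (b i * s ^ (-(α i))) ^ 2 = ∑ i, b i ^ 2 * s ^ (-(2 * α i)) :=
      Finset.sum_congr rfl fun i _ => hsq (b i) i
    rw [this]
    calc Real.sqrt (∑ i, b i ^ 2 * s ^ (-(2 * α i)))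
        ≤ Real.sqrt ((ρ b / s) ^ 2) := Real.sqrt_le_sqrt hB2
      _ = ρ b / s := Real.sqrt_sq (by positivity)
  have hXnn : 0 ≤ X := Real.sqrt_nonneg _
  have hYnn : 0 ≤ Y := Real.sqrt_nonneg _
  have hexp : ∑ i, (a + b) i ^ 2 * s ^ (-(2 * α i)) =
      (∑ i, a i ^ 2 * s ^ (-(2 * α i))) +
      2 * (∑ i, (a i * s ^ (-(α i))) * (b i * s ^ (-(α i)))) +
      (∑ i, b i ^ 2 * s ^ (-(2 * α i))) := by
    calc ∑ i, (a + b) i ^ 2 * s ^ (-(2 * α i))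
        = ∑ i, (a i ^ 2 * s ^ (-(2 * α i)) +
            2 * ((a i * s ^ (-(α i))) * (b i * s ^ (-(α i)))) +
            b i ^ 2 * s ^ (-(2 * α i))) := by
          refine Finset.sum_congr rfl fun i _ => ?_
          have h1 := hsq (a i) i
          have h2 := hsq (b i) i
          have h3 := hsq (a i + b i) i
          simp only [Pi.add_apply]
          nlinarith [h1, h2, h3]
      _ = _ := by rw [Finset.sum_add_distrib, Finset.sum_add_distrib, ← Finset.mul_sum]
  have hXsq : X ^ 2 = ∑ i, (a i * s ^ (-(α i))) ^ 2 := by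
    rw [hX, Real.sq_sqrt]; positivity
  have hYsq : Y ^ 2 = ∑ i, (b i * s ^ (-(α i))) ^ 2 := by
    rw [hY, Real.sq_sqrt]; positivity
  have hsum1 : ρ a / s + ρ b / s = 1 := by field_simp; exact hs.symm
  rw [hexp]
  have hra : ∑ i, a i ^ 2 * s ^ (-(2 * α i)) ≤ (ρ a / s) ^ 2 := hA2
  have hrb : ∑ i, b i ^ 2 * s ^ (-(2 * α i)) ≤ (ρ b / s) ^ 2 := hB2
  nlinarith [hCS, hXa, hYb, hXnn, hYnn, div_pos hρa hsp, div_pos hρb hsp,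
    mul_le_mul hXa hYb hYnn (by positivity)]


private lemma key_pointwise' {n : ℕ} (α : Fin n → ℝ) (hα : ∀ i, 1 ≤ α i)
    (A : ℝ) (hApos : 0 < A)
    (ρ : (Fin n → ℝ) → ℝ) (hρ0 : ρ 0 = 0)
    (hρpos : ∀ x, x ≠ 0 → 0 < ρ x)
    (hρeq : ∀ x, x ≠ 0 → ∑ i, x i ^ 2 * (ρ x) ^ (-(2 * α i)) = 1)
    (htri : ∀ a b, ρ (a + b) ≤ ρ a + ρ b)
    (hneg : ∀ z, ρ (-z) = ρ z)
    (P : MvPolynomial (Fin n) ℝ) (K M D : ℝ) (hK : 0 ≤ K) (hM0 : 0 ≤ M)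
    (hMb : ∀ u : Fin n → ℝ, ‖u‖ ≤ 1 → |eval u P| ≤ M)
    (hKb : ∀ u v : Fin n → ℝ, ‖u‖ ≤ 1 → ‖v‖ ≤ 1 → |eval u P - eval v P| ≤ K * ‖u - v‖)
    (hD : D = ∑ i, ((4:ℝ)/3 + α i * (4/3) ^ (α i + 1)))
    (H : (Fin n → ℝ) → ℝ)
    (hH : ∀ z : Fin n → ℝ, H z = eval (fun i => z i / ρ z ^ α i) P * ρ z ^ (-A))
    {x y : Fin n → ℝ} (hx : x ≠ 0) (hy4 : 4 * ρ x ≤ ρ y) :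
    |H (y - x) - H y| ≤
      (K * D * (4/3) ^ A + M * A * (4/3) ^ (A + 1)) * ρ x * (ρ y) ^ (-(A + 1)) := by
  have hpx : 0 < ρ x := hρpos x hx
  have hT : 0 < ρ y := by linarith
  have hy0 : y ≠ 0 := by intro h; rw [h, hρ0] at hT; exact lt_irrefl 0 hT
  set w : Fin n → ℝ := y - x with hw
  have hwx : w + x = y := by rw [hw]; abel
  set T := ρ y with hTdef
  set S := ρ w with hSdef
  have htri1 : T ≤ S + ρ x := by
    conv_lhs => rw [hTdef, ← hwx]
    exact htri w x
  have htri2 : S ≤ T + ρ x := by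
    have : w = y + (-x) := by rw [hw]; abel
    calc S = ρ (y + (-x)) := by rw [hSdef, this]
      _ ≤ ρ y + ρ (-x) := htri y (-x)
      _ = T + ρ x := by rw [hneg]
  have hc : (0:ℝ) < 3/4 * T := by linarith
  have hS34 : 3/4 * T ≤ S := by linarith
  have hSpos : 0 < S := lt_of_lt_of_le hc hS34
  have hw0 : w ≠ 0 := by
    intro h; rw [hSdef, h, hρ0] at hSpos; exact lt_irrefl 0 hSpos
  have hST : |S - T| ≤ ρ x := abs_sub_le_iff.mpr ⟨by linarith, by linarith⟩
  have hcT : 3/4 * T ≤ T := by linarith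
  -- the projected points
  set wb : Fin n → ℝ := fun i => w i / S ^ α i with hwb
  set yb : Fin n → ℝ := fun i => y i / T ^ α i with hyb
  have hwsph : ∑ i, wb i ^ 2 = 1 := sphere_eq' α hSpos (hρeq w hw0)
  have hysph : ∑ i, yb i ^ 2 = 1 := sphere_eq' α hT (hρeq y hy0)
  -- norms ≤ 1
  have hcoordle1 : ∀ (z : Fin n → ℝ), (∑ i, z i ^ 2 = 1) → ‖z‖ ≤ 1 := by
    intro z hz
    rw [pi_norm_le_iff_of_nonneg zero_le_one]
    intro i
    have h1 : z i ^ 2 ≤ 1 := by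
      rw [← hz]
      refine Finset.single_le_sum (f := fun j => z j ^ 2) (fun j _ => by positivity)
        (Finset.mem_univ i)
    rw [Real.norm_eq_abs]
    nlinarith [abs_nonneg (z i), sq_abs (z i)]
  have hwnorm : ‖wb‖ ≤ 1 := hcoordle1 wb hwsph
  have hynorm : ‖yb‖ ≤ 1 := hcoordle1 yb hysph
  -- helpers for (3/4) rpow
  have h34 : ∀ e : ℝ, ((3:ℝ)/4) ^ (-e) = ((4:ℝ)/3) ^ e := by
    intro e
    rw [Real.rpow_neg (by norm_num : (0:ℝ) ≤ 3/4),
      show ((4:ℝ)/3) = ((3:ℝ)/4)⁻¹ by norm_num,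
      Real.inv_rpow (by norm_num : (0:ℝ) ≤ 3/4)]
  have hcsplit : ∀ e : ℝ, (3/4 * T) ^ (-e) = ((4:ℝ)/3) ^ e * T ^ (-e) := by
    intro e
    rw [Real.mul_rpow (by norm_num : (0:ℝ) ≤ 3/4) hT.le, h34]
  -- coordinate estimate
  have hcoord : ∀ i, |wb i - yb i| ≤
      ((4:ℝ)/3 + α i * (4/3) ^ (α i + 1)) * (ρ x * T⁻¹) := by
    intro i
    have hαi := hα i
    have hdiff : wb i - yb i = (-(x i)) * S ^ (-(α i)) + y i * (S ^ (-(α i)) - T ^ (-(α i))) := by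
      rw [hwb, hyb]
      simp only []
      rw [Real.rpow_neg hSpos.le, Real.rpow_neg hT.le]
      have hwi : w i = y i - x i := by rw [hw]; simp
      rw [hwi]
      field_simp
      ring
    have hx_i : |x i| ≤ (ρ x) ^ α i := abs_coord_le' α hpx (hρeq x hx) i
    have hy_i : |y i| ≤ T ^ α i := abs_coord_le' α hT (hρeq y hy0) i
    -- term 1
    have hpxS : ρ x / S ≤ 1 := by
      rw [div_le_one hSpos]; linarith
    have hpxSpos : 0 < ρ x / S := div_pos hpx hSpos
    have ht1 : (ρ x) ^ α i * S ^ (-(α i)) ≤ (4:ℝ)/3 * (ρ x * T⁻¹) := by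
      have heq1 : (ρ x) ^ α i * S ^ (-(α i)) = (ρ x / S) ^ α i := by
        rw [Real.div_rpow hpx.le hSpos.le, Real.rpow_neg hSpos.le, div_eq_mul_inv]
      have h1 : (ρ x / S) ^ α i ≤ (ρ x / S) ^ (1:ℝ) :=
        Real.rpow_le_rpow_of_exponent_ge hpxSpos hpxS hαi
      have h2 : (ρ x / S) ^ (1:ℝ) = ρ x / S := Real.rpow_one _
      have h3 : ρ x / S ≤ ρ x / (3/4 * T) := by
        apply div_le_div_of_nonneg_left hpx.le hc hS34
      have h4 : ρ x / (3/4 * T) = (4:ℝ)/3 * (ρ x * T⁻¹) := by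
        field_simp
      rw [heq1]
      calc (ρ x / S) ^ α i ≤ (ρ x / S) ^ (1:ℝ) := h1
        _ = ρ x / S := h2
        _ ≤ ρ x / (3/4 * T) := h3
        _ = (4:ℝ)/3 * (ρ x * T⁻¹) := h4
    -- term 2
    have ht2 : |S ^ (-(α i)) - T ^ (-(α i))| ≤ α i * (3/4 * T) ^ (-(α i) - 1) * ρ x := by
      calc |S ^ (-(α i)) - T ^ (-(α i))|
          ≤ α i * (3/4 * T) ^ (-(α i) - 1) * |S - T| :=
            abs_rpow_neg_sub_le' (by linarith) hc hS34 hcT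
        _ ≤ α i * (3/4 * T) ^ (-(α i) - 1) * ρ x := by
            apply mul_le_mul_of_nonneg_left hST
            positivity
    have ht3 : T ^ α i * (3/4 * T) ^ (-(α i) - 1) = (4/3) ^ (α i + 1) * T⁻¹ := by
      have e1 : (-(α i) - 1 : ℝ) = -(α i + 1) := by ring
      rw [e1, hcsplit (α i + 1)]
      have e2 : T ^ α i * ((4/3:ℝ) ^ (α i + 1) * T ^ (-(α i + 1))) =
          (4/3:ℝ) ^ (α i + 1) * (T ^ α i * T ^ (-(α i + 1))) := by ring
      rw [e2, ← Real.rpow_add hT]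
      have e3 : α i + -(α i + 1) = (-1 : ℝ) := by ring
      rw [e3, Real.rpow_neg_one]
    calc |wb i - yb i|
        ≤ |(-(x i)) * S ^ (-(α i))| + |y i * (S ^ (-(α i)) - T ^ (-(α i)))| := by
          rw [hdiff]; exact abs_add_le _ _
      _ = |x i| * S ^ (-(α i)) + |y i| * |S ^ (-(α i)) - T ^ (-(α i))| := by
          rw [abs_mul, abs_mul, abs_neg, abs_of_nonneg (Real.rpow_nonneg hSpos.le _)]
      _ ≤ (ρ x) ^ α i * S ^ (-(α i)) + T ^ α i * (α i * (3/4 * T) ^ (-(α i) - 1) * ρ x) := by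
          have g1 : |x i| * S ^ (-(α i)) ≤ (ρ x) ^ α i * S ^ (-(α i)) :=
            mul_le_mul_of_nonneg_right hx_i (Real.rpow_nonneg hSpos.le _)
          have g2 : |y i| * |S ^ (-(α i)) - T ^ (-(α i))| ≤
              T ^ α i * (α i * (3/4 * T) ^ (-(α i) - 1) * ρ x) :=
            mul_le_mul hy_i ht2 (abs_nonneg _) (Real.rpow_nonneg hT.le _)
          linarith
      _ ≤ (4:ℝ)/3 * (ρ x * T⁻¹) + α i * (4/3) ^ (α i + 1) * (ρ x * T⁻¹) := by
          have heq2 : T ^ α i * (α i * (3/4 * T) ^ (-(α i) - 1) * ρ x) =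
              α i * (4/3) ^ (α i + 1) * (ρ x * T⁻¹) := by
            have e0 : T ^ α i * (α i * (3/4 * T) ^ (-(α i) - 1) * ρ x) =
                α i * (T ^ α i * (3/4 * T) ^ (-(α i) - 1)) * ρ x := by ring
            rw [e0, ht3]; ring
          rw [heq2]
          linarith [ht1]
      _ = ((4:ℝ)/3 + α i * (4/3) ^ (α i + 1)) * (ρ x * T⁻¹) := by ring
  -- norm bound on wb - yb
  have hDnn : 0 ≤ D := by
    rw [hD]
    apply Finset.sum_nonneg
    intro i _
    have := hα i
    have h43 : (0:ℝ) ≤ (4/3:ℝ) ^ (α i + 1) := Real.rpow_nonneg (by norm_num) _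
    nlinarith
  have hEleD : ∀ i, (4:ℝ)/3 + α i * (4/3) ^ (α i + 1) ≤ D := by
    intro i
    rw [hD]
    refine Finset.single_le_sum (f := fun j => (4:ℝ)/3 + α j * (4/3) ^ (α j + 1))
      (fun j _ => ?_) (Finset.mem_univ i)
    have := hα j
    have h43 : (0:ℝ) ≤ (4/3:ℝ) ^ (α j + 1) := Real.rpow_nonneg (by norm_num) _
    nlinarith
  have hpxT : (0:ℝ) ≤ ρ x * T⁻¹ := by positivity
  have hnormdiff : ‖wb - yb‖ ≤ D * (ρ x * T⁻¹) := by
    rw [pi_norm_le_iff_of_nonneg (by positivity)]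
    intro i
    have h1 := hcoord i
    have h2 := hEleD i
    calc ‖(wb - yb) i‖ = |wb i - yb i| := by rw [Pi.sub_apply, Real.norm_eq_abs]
      _ ≤ ((4:ℝ)/3 + α i * (4/3) ^ (α i + 1)) * (ρ x * T⁻¹) := h1
      _ ≤ D * (ρ x * T⁻¹) := mul_le_mul_of_nonneg_right h2 hpxT
  -- split H difference
  have hsplit : H w - H y =
      (eval wb P - eval yb P) * S ^ (-A) + eval yb P * (S ^ (-A) - T ^ (-A)) := by
    rw [hH w, hH y]
    rw [hwb, hyb, hSdef, hTdef]
    ring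
  have hSArpow : (0:ℝ) ≤ S ^ (-A) := Real.rpow_nonneg hSpos.le _
  have hE1 : |eval wb P - eval yb P| ≤ K * (D * (ρ x * T⁻¹)) := by
    calc |eval wb P - eval yb P| ≤ K * ‖wb - yb‖ := hKb wb yb hwnorm hynorm
      _ ≤ K * (D * (ρ x * T⁻¹)) := mul_le_mul_of_nonneg_left hnormdiff hK
  have hSA : S ^ (-A) ≤ (4/3) ^ A * T ^ (-A) := by
    calc S ^ (-A) ≤ (3/4 * T) ^ (-A) :=
          Real.rpow_le_rpow_of_nonpos hc hS34 (by linarith)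
      _ = (4/3) ^ A * T ^ (-A) := hcsplit A
  have hE2 : |eval yb P| ≤ M := hMb yb hynorm
  have hF2 : |S ^ (-A) - T ^ (-A)| ≤ A * ((4/3) ^ (A+1) * (T ^ (-A) * T⁻¹)) * ρ x := by
    have h1 : |S ^ (-A) - T ^ (-A)| ≤ A * (3/4 * T) ^ (-A - 1) * |S - T| :=
      abs_rpow_neg_sub_le' hApos hc hS34 hcT
    have h2 : (3/4 * T) ^ (-A - 1) = (4/3) ^ (A+1) * (T ^ (-A) * T⁻¹) := by
      have e1 : (-A - 1 : ℝ) = -(A + 1) := by ring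
      rw [e1, hcsplit (A+1)]
      congr 1
      rw [show (-(A+1) : ℝ) = -A + (-1) by ring, Real.rpow_add hT, Real.rpow_neg_one]
    calc |S ^ (-A) - T ^ (-A)| ≤ A * (3/4 * T) ^ (-A - 1) * |S - T| := h1
      _ ≤ A * (3/4 * T) ^ (-A - 1) * ρ x := by
          apply mul_le_mul_of_nonneg_left hST; positivity
      _ = A * ((4/3) ^ (A+1) * (T ^ (-A) * T⁻¹)) * ρ x := by rw [h2]
  -- final assembly
  have hTA : T ^ (-(A + 1)) = T ^ (-A) * T⁻¹ := by
    rw [show (-(A+1) : ℝ) = -A + (-1) by ring, Real.rpow_add hT, Real.rpow_neg_one]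
  have hTAnn : (0:ℝ) ≤ T ^ (-A) := Real.rpow_nonneg hT.le _
  have hTinn : (0:ℝ) ≤ T⁻¹ := by positivity
  have h43A : (0:ℝ) ≤ (4/3:ℝ) ^ A := Real.rpow_nonneg (by norm_num) _
  have hmain : |H w - H y| ≤
      K * (D * (ρ x * T⁻¹)) * ((4/3) ^ A * T ^ (-A)) +
      M * (A * ((4/3) ^ (A+1) * (T ^ (-A) * T⁻¹)) * ρ x) := by
    rw [hsplit]
    calc |(eval wb P - eval yb P) * S ^ (-A) + eval yb P * (S ^ (-A) - T ^ (-A))|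
        ≤ |eval wb P - eval yb P| * S ^ (-A) + |eval yb P| * |S ^ (-A) - T ^ (-A)| := by
          refine (abs_add_le _ _).trans ?_
          rw [abs_mul, abs_mul, abs_of_nonneg hSArpow]
      _ ≤ K * (D * (ρ x * T⁻¹)) * ((4/3) ^ A * T ^ (-A)) +
          M * (A * ((4/3) ^ (A+1) * (T ^ (-A) * T⁻¹)) * ρ x) := by
          have g1 : |eval wb P - eval yb P| * S ^ (-A) ≤
              (K * (D * (ρ x * T⁻¹))) * ((4/3) ^ A * T ^ (-A)) :=
            mul_le_mul hE1 hSA hSArpow (by positivity)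
          have g2 : |eval yb P| * |S ^ (-A) - T ^ (-A)| ≤
              M * (A * ((4/3) ^ (A+1) * (T ^ (-A) * T⁻¹)) * ρ x) :=
            mul_le_mul hE2 hF2 (abs_nonneg _) hM0
          linarith
  calc |H w - H y| ≤ K * (D * (ρ x * T⁻¹)) * ((4/3) ^ A * T ^ (-A)) +
        M * (A * ((4/3) ^ (A+1) * (T ^ (-A) * T⁻¹)) * ρ x) := hmain
    _ = (K * D * (4/3) ^ A + M * A * (4/3) ^ (A + 1)) * ρ x * (T ^ (-A) * T⁻¹) := by ring
    _ = (K * D * (4/3) ^ A + M * A * (4/3) ^ (A + 1)) * ρ x * T ^ (-(A + 1)) := by rw [hTA]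


private lemma exists_dyadic {t : ℝ} (ht : 1 ≤ t) :
    ∃ k : ℕ, (2:ℝ) ^ k ≤ t ∧ t < 2 ^ (k + 1) := by
  have ht0 : (0:ℝ) ≤ t := by linarith
  have hfl1 : 1 ≤ ⌊t⌋₊ := by
    rw [Nat.one_le_iff_ne_zero, Ne, Nat.floor_eq_zero, not_lt]
    linarith
  refine ⟨Nat.log 2 ⌊t⌋₊, ?_, ?_⟩
  · have h1 : 2 ^ Nat.log 2 ⌊t⌋₊ ≤ ⌊t⌋₊ := Nat.pow_log_le_self 2 (by omega)
    calc (2:ℝ) ^ Nat.log 2 ⌊t⌋₊ = ((2 ^ Nat.log 2 ⌊t⌋₊ : ℕ) : ℝ) := by push_cast; ring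
      _ ≤ (⌊t⌋₊ : ℝ) := by exact_mod_cast h1
      _ ≤ t := Nat.floor_le ht0
  · have h2 : ⌊t⌋₊ < 2 ^ (Nat.log 2 ⌊t⌋₊ + 1) := Nat.lt_pow_succ_log_self (by norm_num) _
    calc t < ⌊t⌋₊ + 1 := Nat.lt_floor_add_one t
      _ ≤ (2:ℝ) ^ (Nat.log 2 ⌊t⌋₊ + 1) := by exact_mod_cast Nat.succ_le_of_lt h2


/-- Hörmander integral condition: the kernel `H(x) = Y(x̄)ρ(x)^{−α}`, with Y a
spherical harmonic of degree m (restriction of a homogeneous harmonic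
polynomial, with the standard sup bounds on the sphere), satisfies
`∫_{ρ(y) ≥ 4ρ(x)} |H(y−x) − H(y)| dy ≤ C` with C independent of x ≠ 0. -/
theorem stmt_15 {n : ℕ} (hn : 1 ≤ n) (α : Fin n → ℝ) (hα : ∀ i, 1 ≤ α i)
    (A : ℝ) (hA : A = ∑ i, α i)
    (ρ : (Fin n → ℝ) → ℝ) (hρ0 : ρ 0 = 0)
    (hρpos : ∀ x, x ≠ 0 → 0 < ρ x)
    (hρeq : ∀ x, x ≠ 0 → ∑ i, x i ^ 2 * (ρ x) ^ (-(2 * α i)) = 1)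
    (hρuniq : ∀ x, x ≠ 0 → ∀ t : ℝ, 0 < t →
      (∑ i, x i ^ 2 * t ^ (-(2 * α i)) = 1) → t = ρ x)
    (m : ℕ) (P : MvPolynomial (Fin n) ℝ) (hhom : P.IsHomogeneous m)
    (hharm : (∑ i, pderiv i (pderiv i P)) = 0)
    (CY : ℝ)
    (hY : ∀ x : Fin n → ℝ, ∑ i, x i ^ 2 = 1 →
      |eval x P| ≤ CY * (m : ℝ) ^ (((n : ℝ) - 2) / 2))
    (hY' : ∀ (j : Fin n) (x : Fin n → ℝ), ∑ i, x i ^ 2 = 1 →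
      |eval x (pderiv j P)| ≤ CY * (m : ℝ) ^ (1 + ((n : ℝ) - 2) / 2))
    (H : (Fin n → ℝ) → ℝ)
    (hH : ∀ z : Fin n → ℝ, H z = eval (fun i => z i / ρ z ^ α i) P * ρ z ^ (-A)) :
    ∃ C : ℝ, ∀ x : Fin n → ℝ, x ≠ 0 →
      ∫⁻ y in {y : Fin n → ℝ | 4 * ρ x ≤ ρ y},
        ENNReal.ofReal |H (y - x) - H y| ≤ ENNReal.ofReal C := by
  classical
  -- A is positive
  have hApos : 0 < A := by
    rw [hA]
    calc (0:ℝ) < (n:ℝ) := by exact_mod_cast hn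
      _ = ∑ _i : Fin n, (1:ℝ) := by simp
      _ ≤ ∑ i, α i := Finset.sum_le_sum fun i _ => hα i
  have htri := rho_triangle' α hα ρ hρ0 hρpos hρeq
  -- symmetry of ρ
  have hneg : ∀ z, ρ (-z) = ρ z := by
    intro z
    by_cases hz : z = 0
    · rw [hz, neg_zero]
    · have hnz : -z ≠ 0 := fun h => hz (by simpa using h)
      have h1 := hρeq (-z) hnz
      have h2 : ∑ i, z i ^ 2 * (ρ (-z)) ^ (-(2 * α i)) = 1 := by
        rw [← h1]
        exact Finset.sum_congr rfl fun i _ => by rw [Pi.neg_apply, neg_sq]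
      exact hρuniq z hz (ρ (-z)) (hρpos _ hnz) h2
  -- constants from compactness
  have hcd := contDiff_eval_P' P
  obtain ⟨M0, hM0⟩ := (isCompact_closedBall (0 : Fin n → ℝ) 1).exists_bound_of_continuousOn
    hcd.continuous.continuousOn
  obtain ⟨K0, hK0⟩ := (isCompact_closedBall (0 : Fin n → ℝ) 1).exists_bound_of_continuousOn
    ((hcd.continuous_fderiv one_ne_zero).norm.continuousOn)
  set M := max M0 0 with hMdef
  set K := max K0 0 with hKdef
  have hMnn : 0 ≤ M := le_max_right _ _
  have hKnn : 0 ≤ K := le_max_right _ _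
  have hMb : ∀ u : Fin n → ℝ, ‖u‖ ≤ 1 → |eval u P| ≤ M := by
    intro u hu
    have := hM0 u (by rwa [Metric.mem_closedBall, dist_zero_right])
    rw [Real.norm_eq_abs] at this
    exact this.trans (le_max_left _ _)
  have hKb : ∀ u v : Fin n → ℝ, ‖u‖ ≤ 1 → ‖v‖ ≤ 1 →
      |eval u P - eval v P| ≤ K * ‖u - v‖ := by
    intro u v hu hv
    have hmem : ∀ z : Fin n → ℝ, ‖z‖ ≤ 1 → z ∈ Metric.closedBall (0 : Fin n → ℝ) 1 := by
      intro z hz; rwa [Metric.mem_closedBall, dist_zero_right]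
    have := Convex.norm_image_sub_le_of_norm_fderiv_le
      (f := fun z : Fin n → ℝ => eval z P) (C := K)
      (fun z _ => (hcd.differentiable one_ne_zero).differentiableAt)
      (fun z hz => by
        have h1 := hK0 z hz
        rw [Real.norm_eq_abs, abs_of_nonneg (norm_nonneg _)] at h1
        exact h1.trans (le_max_left _ _))
      (convex_closedBall _ _) (hmem v hv) (hmem u hu)
    simpa [Real.norm_eq_abs] using this
  set D : ℝ := ∑ i, ((4:ℝ)/3 + α i * (4/3) ^ (α i + 1)) with hDdef
  have hDnn : 0 ≤ D := by
    apply Finset.sum_nonneg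
    intro i _
    have := hα i
    have h43 : (0:ℝ) ≤ (4/3:ℝ) ^ (α i + 1) := Real.rpow_nonneg (by norm_num) _
    nlinarith
  set C₁ : ℝ := K * D * (4/3) ^ A + M * A * (4/3) ^ (A + 1) with hC₁def
  have hC₁nn : 0 ≤ C₁ := by
    have h1 : (0:ℝ) ≤ (4/3:ℝ) ^ A := Real.rpow_nonneg (by norm_num) _
    have h2 : (0:ℝ) ≤ (4/3:ℝ) ^ (A + 1) := Real.rpow_nonneg (by norm_num) _
    have := hApos
    positivity
  set C₂ : ℝ := C₁ * 2 ^ n * (2:ℝ) ^ A / 4 with hC₂def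
  have hC₂nn : 0 ≤ C₂ := by
    have h1 : (0:ℝ) ≤ (2:ℝ) ^ A := Real.rpow_nonneg (by norm_num) _
    positivity
  refine ⟨2 * C₂, ?_⟩
  intro x hx
  have hpx : 0 < ρ x := hρpos x hx
  set r : ℝ := 4 * ρ x with hrdef
  have hr : 0 < r := by positivity
  -- measurable annuli
  set F : ℝ → (Fin n → ℝ) → ℝ := fun c y => ∑ i, y i ^ 2 * c ^ (-(2 * α i)) with hFdef
  have hFcont : ∀ c, Continuous (F c) := by
    intro c
    exact continuous_finset_sum _ fun i _ =>
      ((continuous_apply i).pow 2).mul continuous_const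
  set Ak : ℕ → Set (Fin n → ℝ) :=
    fun k => {y | 1 ≤ F ((2:ℝ) ^ k * r) y} \ {y | 1 ≤ F ((2:ℝ) ^ (k + 1) * r) y} with hAkdef
  have hAkmeas : ∀ k, MeasurableSet (Ak k) := by
    intro k
    exact (measurableSet_le measurable_const (hFcont _).measurable).diff
      (measurableSet_le measurable_const (hFcont _).measurable)
  have hF0 : ∀ c, F c 0 = 0 := by
    intro c; simp [hFdef]
  have hmemAk : ∀ k, ∀ y ∈ Ak k, y ≠ 0 ∧ (2:ℝ) ^ k * r ≤ ρ y ∧ ρ y < (2:ℝ) ^ (k + 1) * r := by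
    intro k y hy
    obtain ⟨hy1, hy2⟩ := hy
    have hy0 : y ≠ 0 := by
      intro h
      rw [Set.mem_setOf_eq, h, hF0] at hy1
      linarith
    have hpk : (0:ℝ) < (2:ℝ) ^ k * r := by positivity
    have hpk1 : (0:ℝ) < (2:ℝ) ^ (k + 1) * r := by positivity
    refine ⟨hy0, ?_, ?_⟩
    · exact (le_rho_iff' α hα hy0 (hρpos y hy0) (hρeq y hy0) hpk).mpr hy1
    · by_contra hcon
      push_neg at hcon
      exact hy2 ((le_rho_iff' α hα hy0 (hρpos y hy0) (hρeq y hy0) hpk1).mp hcon)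
  have hsub : {y : Fin n → ℝ | 4 * ρ x ≤ ρ y} ⊆ ⋃ k, Ak k := by
    intro y hy
    rw [Set.mem_setOf_eq] at hy
    have hry : r ≤ ρ y := hy
    have hρy : 0 < ρ y := lt_of_lt_of_le hr hry
    have hy0 : y ≠ 0 := by
      intro h; rw [h, hρ0] at hρy; exact lt_irrefl 0 hρy
    have ht1 : 1 ≤ ρ y / r := (one_le_div hr).mpr hry
    obtain ⟨k, hk1, hk2⟩ := exists_dyadic ht1
    have hb1 : (2:ℝ) ^ k * r ≤ ρ y := by
      have h := mul_le_mul_of_nonneg_right hk1 hr.le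
      rwa [div_mul_cancel₀ _ hr.ne'] at h
    have hb2 : ρ y < (2:ℝ) ^ (k + 1) * r := by
      have h := mul_lt_mul_of_pos_right hk2 hr
      rwa [div_mul_cancel₀ _ hr.ne'] at h
    refine Set.mem_iUnion.mpr ⟨k, ?_, ?_⟩
    · exact (le_rho_iff' α hα hy0 (hρpos y hy0) (hρeq y hy0) (by positivity)).mp hb1
    · intro hcon
      have := (le_rho_iff' α hα hy0 (hρpos y hy0) (hρeq y hy0) (by positivity)).mpr hcon
      linarith
  -- pointwise bound on each annulus
  have hbound : ∀ k, ∀ y ∈ Ak k,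
      |H (y - x) - H y| ≤ C₁ * ρ x * ((2:ℝ) ^ k * r) ^ (-(A + 1)) := by
    intro k y hy
    obtain ⟨hy0, hk1, hk2⟩ := hmemAk k y hy
    have h2k : (1:ℝ) ≤ (2:ℝ) ^ k := one_le_pow₀ (by norm_num)
    have hy4 : 4 * ρ x ≤ ρ y := by
      calc 4 * ρ x = r := by rw [hrdef]
        _ = 1 * r := (one_mul r).symm
        _ ≤ (2:ℝ) ^ k * r := mul_le_mul_of_nonneg_right h2k hr.le
        _ ≤ ρ y := hk1
    have hkey := key_pointwise' α hα A hApos ρ hρ0 hρpos hρeq htri hneg P K M D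
      hKnn hMnn hMb hKb hDdef H hH hx hy4
    have hmono : (ρ y) ^ (-(A + 1)) ≤ ((2:ℝ) ^ k * r) ^ (-(A + 1)) :=
      Real.rpow_le_rpow_of_nonpos (by positivity) hk1 (by linarith)
    calc |H (y - x) - H y| ≤ C₁ * ρ x * (ρ y) ^ (-(A + 1)) := hkey
      _ ≤ C₁ * ρ x * ((2:ℝ) ^ k * r) ^ (-(A + 1)) := by
        apply mul_le_mul_of_nonneg_left hmono (by positivity)
  -- volume bound on each annulus
  have hAkvol : ∀ k, volume (Ak k) ≤
      ENNReal.ofReal (2 ^ n * ((2:ℝ) ^ (k + 1) * r) ^ A) := by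
    intro k
    set R : ℝ := (2:ℝ) ^ (k + 1) * r with hRdef
    have hRpos : 0 < R := by positivity
    have hsubbox : Ak k ⊆ Set.pi Set.univ fun i => Set.Icc (-(R ^ α i)) (R ^ α i) := by
      intro y hy
      obtain ⟨hy0, _, hk2⟩ := hmemAk k y hy
      intro i _
      have h1 : |y i| ≤ (ρ y) ^ α i := abs_coord_le' α (hρpos y hy0) (hρeq y hy0) i
      have h2 : (ρ y) ^ α i ≤ R ^ α i :=
        Real.rpow_le_rpow (hρpos y hy0).le hk2.le (by linarith [hα i])
      have := h1.trans h2
      exact ⟨by cases abs_le.mp this with | intro h _ => exact h, (abs_le.mp this).2⟩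
    calc volume (Ak k) ≤ volume (Set.pi Set.univ fun i => Set.Icc (-(R ^ α i)) (R ^ α i)) :=
          measure_mono hsubbox
      _ = ∏ i, volume (Set.Icc (-(R ^ α i)) (R ^ α i)) := volume_pi_pi _
      _ = ∏ i, ENNReal.ofReal (2 * R ^ α i) := by
          refine Finset.prod_congr rfl fun i _ => ?_
          rw [Real.volume_Icc]
          congr 1
          ring
      _ = ENNReal.ofReal (∏ i, 2 * R ^ α i) := by
          rw [ENNReal.ofReal_prod_of_nonneg]
          intro i _
          have : (0:ℝ) ≤ R ^ α i := Real.rpow_nonneg hRpos.le _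
          linarith
      _ = ENNReal.ofReal (2 ^ n * R ^ A) := by
          congr 1
          rw [Finset.prod_mul_distrib, Finset.prod_const, Finset.card_univ, Fintype.card_fin,
            ← Real.rpow_sum_of_pos hRpos, ← hA]
  -- the key arithmetic identity
  have hρr : ρ x * r⁻¹ = 1/4 := by
    rw [hrdef]; field_simp
  have haux : ∀ k : ℕ, ((2:ℝ) ^ k * r) ^ (-(A + 1)) * ((2:ℝ) ^ (k + 1) * r) ^ A =
      (2:ℝ) ^ A * ((1:ℝ)/2) ^ k * r⁻¹ := by
    intro k
    have h2k : ((2:ℝ) ^ k : ℝ) = (2:ℝ) ^ ((k : ℕ) : ℝ) := (Real.rpow_natCast 2 k).symm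
    have h2k1 : ((2:ℝ) ^ (k + 1) : ℝ) = (2:ℝ) ^ (((k + 1 : ℕ)) : ℝ) :=
      (Real.rpow_natCast 2 (k + 1)).symm
    rw [Real.mul_rpow (by positivity) hr.le, Real.mul_rpow (by positivity) hr.le,
      h2k, h2k1, ← Real.rpow_mul (by norm_num : (0:ℝ) ≤ 2),
      ← Real.rpow_mul (by norm_num : (0:ℝ) ≤ 2)]
    rw [show (2:ℝ) ^ (((k:ℕ):ℝ) * (-(A + 1))) * r ^ (-(A + 1)) *
        ((2:ℝ) ^ ((((k + 1:ℕ)):ℝ) * A) * r ^ A) =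
        ((2:ℝ) ^ (((k:ℕ):ℝ) * (-(A + 1))) * (2:ℝ) ^ ((((k + 1:ℕ)):ℝ) * A)) *
        (r ^ (-(A + 1)) * r ^ A) from by ring,
      ← Real.rpow_add (by norm_num : (0:ℝ) < 2), ← Real.rpow_add hr]
    have e1 : ((k:ℕ):ℝ) * (-(A + 1)) + (((k + 1:ℕ)):ℝ) * A = A + (-(k:ℝ)) := by
      push_cast; ring
    have e2 : (-(A + 1)) + A = (-1:ℝ) := by ring
    rw [e1, e2, Real.rpow_add (by norm_num : (0:ℝ) < 2), Real.rpow_neg_one,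
      Real.rpow_neg (by norm_num : (0:ℝ) ≤ 2), Real.rpow_natCast]
    rw [show ((1:ℝ)/2) ^ k = ((2:ℝ) ^ k)⁻¹ by rw [one_div, inv_pow]]
  have harith : ∀ k : ℕ,
      C₁ * ρ x * ((2:ℝ) ^ k * r) ^ (-(A + 1)) * (2 ^ n * ((2:ℝ) ^ (k + 1) * r) ^ A) =
      C₂ * ((1:ℝ)/2) ^ k := by
    intro k
    have h := haux k
    calc C₁ * ρ x * ((2:ℝ) ^ k * r) ^ (-(A + 1)) * (2 ^ n * ((2:ℝ) ^ (k + 1) * r) ^ A)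
        = C₁ * 2 ^ n * ρ x * (((2:ℝ) ^ k * r) ^ (-(A + 1)) * ((2:ℝ) ^ (k + 1) * r) ^ A) := by
          ring
      _ = C₁ * 2 ^ n * ρ x * ((2:ℝ) ^ A * ((1:ℝ)/2) ^ k * r⁻¹) := by rw [h]
      _ = C₁ * 2 ^ n * (2:ℝ) ^ A * ((1:ℝ)/2) ^ k * (ρ x * r⁻¹) := by ring
      _ = C₁ * 2 ^ n * (2:ℝ) ^ A * ((1:ℝ)/2) ^ k * (1/4) := by rw [hρr]
      _ = C₂ * ((1:ℝ)/2) ^ k := by rw [hC₂def]; ring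
  -- per-annulus integral bound
  have hInt : ∀ k, ∫⁻ y in Ak k, ENNReal.ofReal |H (y - x) - H y| ≤
      ENNReal.ofReal (C₂ * ((1:ℝ)/2) ^ k) := by
    intro k
    have hb : (0:ℝ) ≤ C₁ * ρ x * ((2:ℝ) ^ k * r) ^ (-(A + 1)) := by positivity
    calc ∫⁻ y in Ak k, ENNReal.ofReal |H (y - x) - H y|
        ≤ ∫⁻ _y in Ak k, ENNReal.ofReal (C₁ * ρ x * ((2:ℝ) ^ k * r) ^ (-(A + 1))) := by
          refine setLIntegral_mono measurable_const fun y hy => ?_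
          exact ENNReal.ofReal_le_ofReal (hbound k y hy)
      _ = ENNReal.ofReal (C₁ * ρ x * ((2:ℝ) ^ k * r) ^ (-(A + 1))) * volume (Ak k) :=
          setLIntegral_const _ _
      _ ≤ ENNReal.ofReal (C₁ * ρ x * ((2:ℝ) ^ k * r) ^ (-(A + 1))) *
          ENNReal.ofReal (2 ^ n * ((2:ℝ) ^ (k + 1) * r) ^ A) :=
          mul_le_mul_right (hAkvol k) _
      _ = ENNReal.ofReal (C₁ * ρ x * ((2:ℝ) ^ k * r) ^ (-(A + 1)) *
          (2 ^ n * ((2:ℝ) ^ (k + 1) * r) ^ A)) := (ENNReal.ofReal_mul hb).symm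
      _ = ENNReal.ofReal (C₂ * ((1:ℝ)/2) ^ k) := by rw [harith k]
  -- sum up
  have hhalf : ENNReal.ofReal ((1:ℝ)/2) = 2⁻¹ := by
    rw [show (1/2:ℝ) = (2:ℝ)⁻¹ by norm_num, ENNReal.ofReal_inv_of_pos (by norm_num)]
    norm_num
  calc ∫⁻ y in {y : Fin n → ℝ | 4 * ρ x ≤ ρ y}, ENNReal.ofReal |H (y - x) - H y|
      ≤ ∫⁻ y in ⋃ k, Ak k, ENNReal.ofReal |H (y - x) - H y| :=
        lintegral_mono' (Measure.restrict_mono hsub le_rfl) le_rfl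
    _ ≤ ∑' k, ∫⁻ y in Ak k, ENNReal.ofReal |H (y - x) - H y| :=
        lintegral_iUnion_le _ _
    _ ≤ ∑' k, ENNReal.ofReal (C₂ * ((1:ℝ)/2) ^ k) := ENNReal.tsum_le_tsum hInt
    _ = ENNReal.ofReal C₂ * ∑' k, (ENNReal.ofReal ((1:ℝ)/2)) ^ k := by
        rw [← ENNReal.tsum_mul_left]
        exact tsum_congr fun k => by
          rw [ENNReal.ofReal_mul hC₂nn, ENNReal.ofReal_pow (by norm_num)]
    _ = ENNReal.ofReal C₂ * 2 := by
        rw [hhalf, ENNReal.tsum_geometric, ENNReal.one_sub_inv_two, inv_inv]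
    _ = ENNReal.ofReal (2 * C₂) := by
        rw [mul_comm (2:ℝ) C₂, ENNReal.ofReal_mul hC₂nn]
        norm_num
end
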